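/- A category C is isomorphic to the free category on some directed graph if and only if C is a left Rees category in which every invertible arrow is an identity; equivalently, if and only if C is an equidivisible category equipped with a length functor in which every invertible arrow is an identity. -/

import Mathlib

open CategoryTheory

universe v u

variable {C : Type u} [Category.{v} C]

/-- The set of all arrows of a category, as a sigma type. -/
abbrev CatArr (C : Type u) [Category.{v} C] : Type (max u v) := Σ (X : C) (Y : C), X ⟶ Y

/-- An arrow is an atom if it is not invertible and in any factorization one factor
is invertible. -/
def IsAtomArrow {X Y : C} (a : X ⟶ Y) : Prop :=
  ¬ IsIso a ∧ ∀ ⦃Z : C⦄ (b : X ⟶ Z) (c : Z ⟶ Y), a = b ≫ c → IsIso b ∨ IsIso c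

/-- The principal right ideal `aC` generated by an arrow `a`. -/
def rIdeal {X Y : C} (a : X ⟶ Y) : Set (CatArr C) :=
  { p | ∃ (Z : C) (b : Y ⟶ Z), p = ⟨X, Z, a ≫ b⟩ }

/-- The principal left ideal `Ca` generated by an arrow `a`. -/
def lIdeal {X Y : C} (a : X ⟶ Y) : Set (CatArr C) :=
  { p | ∃ (Z : C) (b : Z ⟶ X), p = ⟨Z, Y, b ≫ a⟩ }

/-- The principal two-sided ideal `CaC` generated by an arrow `a`. -/
def twoIdeal {X Y : C} (a : X ⟶ Y) : Set (CatArr C) :=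
  { p | ∃ (W Z : C) (b : W ⟶ X) (c : Y ⟶ Z), p = ⟨W, Z, b ≫ a ≫ c⟩ }

/-- A category is left cancellative if `ax = ay` implies `x = y`. -/
def LeftCancellativeCat (C : Type u) [Category.{v} C] : Prop :=
  ∀ ⦃X Y Z : C⦄ (a : X ⟶ Y) (x y : Y ⟶ Z), a ≫ x = a ≫ y → x = y

/-- A category is right cancellative if `xa = ya` implies `x = y`. -/
def RightCancellativeCat (C : Type u) [Category.{v} C] : Prop :=
  ∀ ⦃X Y Z : C⦄ (x y : X ⟶ Y) (a : Y ⟶ Z), x ≫ a = y ≫ a → x = y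

/-- A category is right rigid if principal right ideals that intersect are comparable. -/
def RightRigid (C : Type u) [Category.{v} C] : Prop :=
  ∀ ⦃X Y X' Y' : C⦄ (a : X ⟶ Y) (b : X' ⟶ Y'),
    (rIdeal a ∩ rIdeal b).Nonempty → rIdeal a ⊆ rIdeal b ∨ rIdeal b ⊆ rIdeal a

/-- A category is equidivisible if every equality `ab = cd` admits an intermediate arrow. -/
def Equidivisible (C : Type u) [Category.{v} C] : Prop :=
  ∀ ⦃W X Y Z : C⦄ (a : W ⟶ X) (b : X ⟶ Z) (c : W ⟶ Y) (d : Y ⟶ Z),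
    a ≫ b = c ≫ d →
      (∃ u : Y ⟶ X, a = c ≫ u ∧ d = u ≫ b) ∨ (∃ v : X ⟶ Y, c = a ≫ v ∧ b = v ≫ d)

/-- A length functor on a category: additive on composition, zero exactly on invertible
arrows, one exactly on atoms. -/
structure LengthFunctor (C : Type u) [Category.{v} C] where
  len : ∀ ⦃X Y : C⦄, (X ⟶ Y) → ℕ
  len_comp : ∀ ⦃X Y Z : C⦄ (f : X ⟶ Y) (g : Y ⟶ Z), len (f ≫ g) = len f + len g
  len_eq_zero_iff : ∀ ⦃X Y : C⦄ (f : X ⟶ Y), len f = 0 ↔ IsIso f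
  len_eq_one_iff : ∀ ⦃X Y : C⦄ (f : X ⟶ Y), len f = 1 ↔ IsAtomArrow f

/-- A subset of the arrows is a principal right ideal if it has the form `xC`. -/
def IsPrincipalRightIdeal (S : Set (CatArr C)) : Prop :=
  ∃ (U V : C) (x : U ⟶ V), S = rIdeal x

/-- The interval `[aC, bC]` of principal right ideals between `aC` and `bC`. -/
def rInterval {X Y Z W : C} (a : X ⟶ Y) (b : Z ⟶ W) : Set (Set (CatArr C)) :=
  { S | IsPrincipalRightIdeal S ∧ rIdeal a ⊆ S ∧ S ⊆ rIdeal b }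

/-- A left Rees category: left cancellative, right rigid, and each principal right
ideal is properly contained in only finitely many principal right ideals. -/
def IsLeftReesCategory (C : Type u) [Category.{v} C] : Prop :=
  LeftCancellativeCat C ∧ RightRigid C ∧
    ∀ ⦃X Y : C⦄ (a : X ⟶ Y),
      { S : Set (CatArr C) | IsPrincipalRightIdeal S ∧ rIdeal a ⊂ S }.Finite

/-- A category is skeletal if every invertible arrow has equal domain and codomain. -/
def SkeletalCat (C : Type u) [Category.{v} C] : Prop :=
  ∀ ⦃X Y : C⦄ (g : X ⟶ Y), IsIso g → X = Y

/-- `C` is isomorphic (as a category) to the free category on some directed graph. -/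
def IsFreeCategory (C : Type u) [Category.{v} C] : Prop :=
  ∃ (V : Type u) (q : Quiver.{v + 1} V) (F : Paths V ⥤ C) (G : C ⥤ Paths V),
    F ⋙ G = 𝟭 (Paths V) ∧ G ⋙ F = 𝟭 C

/-- Every invertible arrow of `C` is an identity. -/
def OnlyIdentityIsos (C : Type u) [Category.{v} C] : Prop :=
  ∀ ⦃X Y : C⦄ (g : X ⟶ Y), IsIso g → ∃ h : X = Y, g = eqToHom h

-- aux lemmas
lemma split_iso (hLC : LeftCancellativeCat C) {X Z : C} (c : X ⟶ Z) (u : Z ⟶ X)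
    (h : c ≫ u = 𝟙 X) : IsIso c ∧ IsIso u := by
  have h2 : u ≫ c = 𝟙 Z := hLC c (u ≫ c) (𝟙 Z) (by rw [← Category.assoc, h]; simp)
  exact ⟨⟨u, h, h2⟩, ⟨c, h2, h⟩⟩

lemma mem_rIdeal_self {X Y : C} (f : X ⟶ Y) : (⟨X, Y, f⟩ : CatArr C) ∈ rIdeal f :=
  ⟨Y, 𝟙 Y, by simp⟩

lemma rIdeal_subset_of_factor {X V Y : C} (x : X ⟶ V) (w : V ⟶ Y) {f : X ⟶ Y}
    (h : f = x ≫ w) : rIdeal f ⊆ rIdeal x := by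
  rintro p ⟨Z, b, rfl⟩
  exact ⟨Z, w ≫ b, by rw [h, Category.assoc]⟩

lemma factor_of_mem_rIdeal {U V X Y : C} (x : U ⟶ V) (f : X ⟶ Y)
    (h : (⟨X, Y, f⟩ : CatArr C) ∈ rIdeal x) :
    ∃ (hXU : X = U) (w : V ⟶ Y), f = eqToHom hXU ≫ x ≫ w := by
  obtain ⟨Z, b, hb⟩ := h
  injection hb with h1 h2
  subst h1
  have h2' := eq_of_heq h2
  injection h2' with h3 h4
  subst h3
  exact ⟨rfl, b, by simpa using eq_of_heq h4⟩

lemma factor_of_mem_rIdeal' {X V Y : C} (x : X ⟶ V) (f : X ⟶ Y)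
    (h : (⟨X, Y, f⟩ : CatArr C) ∈ rIdeal x) : ∃ w : V ⟶ Y, f = x ≫ w := by
  obtain ⟨hXU, w, hw⟩ := factor_of_mem_rIdeal x f h
  exact ⟨w, by simpa using hw⟩

lemma factor_of_rIdeal_subset {X Y U V : C} {f : X ⟶ Y} {x : U ⟶ V}
    (h : rIdeal f ⊆ rIdeal x) : ∃ (hXU : X = U) (w : V ⟶ Y), f = eqToHom hXU ≫ x ≫ w :=
  factor_of_mem_rIdeal x f (h (mem_rIdeal_self f))

lemma factor_of_rIdeal_subset' {X Y V : C} {f : X ⟶ Y} {x : X ⟶ V}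
    (h : rIdeal f ⊆ rIdeal x) : ∃ w : V ⟶ Y, f = x ≫ w :=
  factor_of_mem_rIdeal' x f (h (mem_rIdeal_self f))

lemma rIdeal_eqToHom_comp {X U V : C} (h : X = U) (x : U ⟶ V) :
    rIdeal (eqToHom h ≫ x) = rIdeal x := by subst h; simp

lemma rIdeal_le_top {X Y : C} (f : X ⟶ Y) : rIdeal f ⊆ rIdeal (𝟙 X) :=
  rIdeal_subset_of_factor (𝟙 X) f (by simp)

lemma isIso_of_top_subset (hLC : LeftCancellativeCat C) {X Y : C} {f : X ⟶ Y}
    (h : rIdeal (𝟙 X) ⊆ rIdeal f) : IsIso f := by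
  obtain ⟨w, hw⟩ := factor_of_mem_rIdeal' f (𝟙 X) (h (mem_rIdeal_self (𝟙 X)))
  exact (split_iso hLC f w hw.symm).1

lemma rIdeal_eq_top_of_isIso {X Y : C} (f : X ⟶ Y) (hf : IsIso f) :
    rIdeal f = rIdeal (𝟙 X) :=
  subset_antisymm (rIdeal_le_top f) (rIdeal_subset_of_factor f (inv f) (by simp))

lemma rIdeal_comp_isIso {X Y Z : C} (f : X ⟶ Y) (u : Y ⟶ Z) (hu : IsIso u) :
    rIdeal (f ≫ u) = rIdeal f := by
  refine subset_antisymm (rIdeal_subset_of_factor f u rfl)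
    (rIdeal_subset_of_factor (f ≫ u) (inv u) ?_)
  rw [Category.assoc, IsIso.hom_inv_id, Category.comp_id]

lemma rIdeal_ssubset (hLC : LeftCancellativeCat C) {X W Y : C} (b : X ⟶ W) (c : W ⟶ Y)
    (hc : ¬ IsIso c) {f : X ⟶ Y} (hf : f = b ≫ c) : rIdeal f ⊂ rIdeal b := by
  rw [Set.ssubset_def]
  refine ⟨rIdeal_subset_of_factor b c hf, fun hsub => hc ?_⟩
  obtain ⟨u, hu⟩ := factor_of_rIdeal_subset' hsub
  have : c ≫ u = 𝟙 W := by
    refine hLC b _ _ ?_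
    rw [← Category.assoc, ← hf, ← hu, Category.comp_id]
  exact (split_iso hLC c u this).1

lemma rIdeal_ssubset_top (hLC : LeftCancellativeCat C) {X Y : C} (f : X ⟶ Y)
    (hf : ¬ IsIso f) : rIdeal f ⊂ rIdeal (𝟙 X) :=
  rIdeal_ssubset hLC (𝟙 X) f hf (by simp)

-- derived structural lemmas
lemma leftCancel_of_length (hEq : Equidivisible C) (L : LengthFunctor C)
    (hOII : OnlyIdentityIsos C) : LeftCancellativeCat C := by
  intro X Y Z a x y h
  rcases hEq a x a y h with ⟨u, hu1, hu2⟩ | ⟨v, hv1, hv2⟩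
  · have hlu : L.len u = 0 := by
      have := L.len_comp a u
      rw [← hu1] at this
      omega
    obtain ⟨e, rfl⟩ := hOII u ((L.len_eq_zero_iff u).1 hlu)
    rw [hu2]; simp
  · have hlv : L.len v = 0 := by
      have := L.len_comp a v
      rw [← hv1] at this
      omega
    obtain ⟨e, rfl⟩ := hOII v ((L.len_eq_zero_iff v).1 hlv)
    rw [hv2]; simp

lemma strip_lemma (hEq : Equidivisible C) (hOII : OnlyIdentityIsos C)
    {X Y₁ Y₂ Z : C} (g₁ : X ⟶ Y₁) (a₁ : Y₁ ⟶ Z) (g₂ : X ⟶ Y₂) (a₂ : Y₂ ⟶ Z)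
    (h₁ : IsAtomArrow a₁) (h₂ : IsAtomArrow a₂) (h : g₁ ≫ a₁ = g₂ ≫ a₂) :
    ∃ (e : Y₁ = Y₂), g₂ = g₁ ≫ eqToHom e ∧ a₁ = eqToHom e ≫ a₂ := by
  rcases hEq g₁ a₁ g₂ a₂ h with ⟨u, hu1, hu2⟩ | ⟨v, hv1, hv2⟩
  · have hiso : IsIso u := by
      rcases h₂.2 u a₁ hu2 with h' | h'
      · exact h'
      · exact absurd h' h₁.1
    obtain ⟨e, rfl⟩ := hOII u hiso
    refine ⟨e.symm, ?_, ?_⟩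
    · rw [hu1]; simp
    · rw [hu2]; simp
  · have hiso : IsIso v := by
      rcases h₁.2 v a₂ hv2 with h' | h'
      · exact h'
      · exact absurd h' h₂.1
    obtain ⟨e, rfl⟩ := hOII v hiso
    exact ⟨e, hv1, hv2⟩

lemma equidiv_of_rigid (hLC : LeftCancellativeCat C) (hRR : RightRigid C) :
    Equidivisible C := by
  intro W X Y Z a b c d h
  have hne : (rIdeal a ∩ rIdeal c).Nonempty :=
    ⟨⟨W, Z, a ≫ b⟩, ⟨Z, b, rfl⟩, ⟨Z, d, by rw [h]⟩⟩
  rcases hRR a c hne with hs | hs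
  · obtain ⟨u, hu⟩ := factor_of_rIdeal_subset' hs
    refine Or.inl ⟨u, hu, hLC c _ _ ?_⟩
    rw [← Category.assoc, ← hu]; exact h.symm
  · obtain ⟨v, hv⟩ := factor_of_rIdeal_subset' hs
    refine Or.inr ⟨v, hv, hLC a _ _ ?_⟩
    rw [← Category.assoc, ← hv]; exact h

lemma rigid_of_equidiv (hEq : Equidivisible C) : RightRigid C := by
  intro X Y X' Y' a b hne
  obtain ⟨p, hpa, hpb⟩ := hne
  obtain ⟨Z, u, rfl⟩ := hpa
  obtain ⟨hXX', w, hw⟩ := factor_of_mem_rIdeal b (a ≫ u) hpb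
  subst hXX'
  rw [eqToHom_refl, Category.id_comp] at hw
  rcases hEq a u b w hw with ⟨t, ht, _⟩ | ⟨t, ht, _⟩
  · exact Or.inl (rIdeal_subset_of_factor b t ht)
  · exact Or.inr (rIdeal_subset_of_factor a t ht)

lemma principal_rep {X Y : C} (f : X ⟶ Y) {S : Set (CatArr C)}
    (hP : IsPrincipalRightIdeal S) (hsub : rIdeal f ⊆ S) :
    ∃ (V : C) (x : X ⟶ V) (w : V ⟶ Y), S = rIdeal x ∧ f = x ≫ w := by
  obtain ⟨U, V, x₀, rfl⟩ := hP
  obtain ⟨hXU, w, hw⟩ := factor_of_rIdeal_subset hsub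
  exact ⟨V, eqToHom hXU ≫ x₀, w, (rIdeal_eqToHom_comp hXU x₀).symm,
    by rw [hw, Category.assoc]⟩

lemma finiteness_of_length (hEq : Equidivisible C) (L : LengthFunctor C)
    (hOII : OnlyIdentityIsos C) {X Y : C} (a : X ⟶ Y) :
    { S : Set (CatArr C) | IsPrincipalRightIdeal S ∧ rIdeal a ⊂ S }.Finite := by
  classical
  set T := { S : Set (CatArr C) | IsPrincipalRightIdeal S ∧ rIdeal a ⊂ S } with hT
  have key : ∀ {V V' : C} (x : X ⟶ V) (x' : X ⟶ V') (w : V ⟶ Y) (w' : V' ⟶ Y),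
      a = x ≫ w → a = x' ≫ w' → L.len x = L.len x' → rIdeal x = rIdeal x' := by
    intro V V' x x' w w' h1 h2 hlen
    have h : x ≫ w = x' ≫ w' := by rw [← h1, ← h2]
    rcases hEq x w x' w' h with ⟨u, hu1, _⟩ | ⟨u, hu1, _⟩
    · have hlu : L.len u = 0 := by
        have := L.len_comp x' u; rw [← hu1] at this; omega
      have hiso := (L.len_eq_zero_iff u).1 hlu
      rw [hu1, rIdeal_comp_isIso x' u hiso]
    · have hlu : L.len u = 0 := by
        have := L.len_comp x u; rw [← hu1] at this; omega
      have hiso := (L.len_eq_zero_iff u).1 hlu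
      rw [hu1, rIdeal_comp_isIso x u hiso]
  have hrep : ∀ s : ↥T, ∃ (V : C) (x : X ⟶ V) (w : V ⟶ Y),
      s.1 = rIdeal x ∧ a = x ≫ w := fun s => principal_rep a s.2.1 s.2.2.subset
  choose Vc xc wc hSx hax using hrep
  have bound : ∀ s : ↥T, L.len (xc s) < L.len a + 1 := by
    intro s
    have := L.len_comp (xc s) (wc s)
    rw [← hax s] at this
    omega
  haveI : Finite ↥T := by
    refine Finite.of_injective (fun s => (⟨L.len (xc s), bound s⟩ : Fin (L.len a + 1))) ?_
    intro s t hst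
    have hlen : L.len (xc s) = L.len (xc t) := congrArg Fin.val hst
    have := key (xc s) (xc t) (wc s) (wc t) (hax s) (hax t) hlen
    exact Subtype.ext (by rw [hSx s, hSx t, this])
  exact T.toFinite

-- The quiver of atoms
structure AtomQuiv (C : Type u) [Category.{v} C] : Type u where
  as : C

@[ext]
structure AtomHom (X Y : AtomQuiv C) : Type (v + 1) where
  val : X.as ⟶ Y.as
  prop : IsAtomArrow val

instance : Quiver.{v + 1} (AtomQuiv C) :=
  ⟨fun X Y => AtomHom X Y⟩

lemma AtomQuiv.ext' {X Y : AtomQuiv C} (h : X.as = Y.as) : X = Y := by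
  cases X; cases Y; cases h; rfl

def evP : ∀ {X Y : AtomQuiv C}, Quiver.Path X Y → (X.as ⟶ Y.as)
  | _, _, .nil => 𝟙 _
  | _, _, .cons p e => evP p ≫ e.val

@[simp] lemma evP_nil {X : AtomQuiv C} : evP (Quiver.Path.nil : Quiver.Path X X) = 𝟙 X.as := by rw [evP]

@[simp] lemma evP_cons {X Y Z : AtomQuiv C} (p : Quiver.Path X Y) (e : Y ⟶ Z) :
    evP (p.cons e) = evP p ≫ e.val := by rw [evP]

lemma evP_comp {X Y Z : AtomQuiv C} (p : Quiver.Path X Y) (q : Quiver.Path Y Z) :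
    evP (p.comp q) = evP p ≫ evP q := by
  induction q with
  | nil => simp
  | cons q' e ih => rw [Quiver.Path.comp_cons]; simp [ih]

lemma evP_inj (hLC : LeftCancellativeCat C) (hEq : Equidivisible C)
    (hOII : OnlyIdentityIsos C) {X Y : AtomQuiv C} (p : Quiver.Path X Y) :
    ∀ q : Quiver.Path X Y, evP p = evP q → p = q := by
  induction p with
  | nil =>
    intro q h
    cases q with
    | nil => rfl
    | cons q' e =>
      exact absurd (split_iso hLC (evP q') e.val (by simpa using h.symm)).2 e.prop.1
  | cons p' e ih =>
    intro q h
    cases q with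
    | nil =>
      exact absurd (split_iso hLC (evP p') e.val (by simpa using h)).2 e.prop.1
    | cons q' e' =>
      simp only [evP_cons] at h
      obtain ⟨hW, h1, h2⟩ := strip_lemma hEq hOII (evP p') e.val (evP q') e'.val
        e.prop e'.prop h
      obtain rfl := AtomQuiv.ext' hW
      rw [eqToHom_refl, Category.comp_id] at h1
      rw [eqToHom_refl, Category.id_comp] at h2
      have hp : p' = q' := ih q' h1.symm
      have he : e = e' := AtomHom.ext h2
      rw [hp, he]

lemma atom_right_factor (L : LengthFunctor C) :
    ∀ (n : ℕ) {X Y : C} (f : X ⟶ Y), L.len f = n → 1 ≤ n →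
      ∃ (Z : C) (g : X ⟶ Z) (b : Z ⟶ Y), IsAtomArrow b ∧ f = g ≫ b := by
  intro n
  induction n using Nat.strong_induction_on with
  | _ n ih =>
    intro X Y f hf h1
    by_cases ha : IsAtomArrow f
    · exact ⟨X, 𝟙 X, f, ha, by simp⟩
    · have hni : ¬ IsIso f := by
        intro hiso
        rw [(L.len_eq_zero_iff f).2 hiso] at hf
        omega
      have hfac : ∃ (Z : C) (b : X ⟶ Z) (c : Z ⟶ Y), f = b ≫ c ∧ ¬IsIso b ∧ ¬IsIso c := by
        rcases not_and_or.mp ha with h' | h'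
        · exact absurd hni h'
        · push_neg at h'
          obtain ⟨Z, b, c, hbc, hb, hc⟩ := h'
          exact ⟨Z, b, c, hbc, hb, hc⟩
      obtain ⟨Z, b, c, hbc, hb, hc⟩ := hfac
      have hlb : 1 ≤ L.len b := Nat.one_le_iff_ne_zero.mpr
        (fun h0 => hb ((L.len_eq_zero_iff b).1 h0))
      have hlc : 1 ≤ L.len c := Nat.one_le_iff_ne_zero.mpr
        (fun h0 => hc ((L.len_eq_zero_iff c).1 h0))
      have hlt : L.len c < n := by
        have := L.len_comp b c
        rw [← hbc, hf] at this
        omega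
      obtain ⟨Z', g, b', hb', hg⟩ := ih (L.len c) hlt c rfl hlc
      exact ⟨Z', b ≫ g, b', hb', by rw [hbc, hg, Category.assoc]⟩

lemma hex_of_length (L : LengthFunctor C) (hOII : OnlyIdentityIsos C) :
    ∀ {X Y : C} (f : X ⟶ Y),
      ∃ p : Quiver.Path (AtomQuiv.mk X) (AtomQuiv.mk Y), evP p = f := by
  have key : ∀ (n : ℕ) {X Y : C} (f : X ⟶ Y), L.len f = n →
      ∃ p : Quiver.Path (AtomQuiv.mk X) (AtomQuiv.mk Y), evP p = f := by
    intro n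
    induction n using Nat.strong_induction_on with
    | _ n ih =>
      intro X Y f hf
      rcases Nat.eq_zero_or_pos n with rfl | hpos
      · have hiso := (L.len_eq_zero_iff f).1 hf
        obtain ⟨e, rfl⟩ := hOII f hiso
        subst e
        exact ⟨Quiver.Path.nil, by simp⟩
      · obtain ⟨Z, g, b, hb, hg⟩ := atom_right_factor L n f hf hpos
        have hlb : L.len b = 1 := (L.len_eq_one_iff b).2 hb
        have hlg : L.len g < n := by
          have := L.len_comp g b
          rw [← hg, hf] at this
          omega
        obtain ⟨p, hp⟩ := ih (L.len g) hlg g rfl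
        exact ⟨p.cons ⟨b, hb⟩, by simp [hp, hg]⟩
  intro X Y f
  exact key (L.len f) f rfl

section Rees

noncomputable def reesMeasure (hFin : ∀ ⦃X Y : C⦄ (a : X ⟶ Y),
  { S : Set (CatArr C) | IsPrincipalRightIdeal S ∧ rIdeal a ⊂ S }.Finite) {X Y : C} (f : X ⟶ Y) : ℕ := (hFin f).toFinset.card

lemma atom_left_factor (hFin : ∀ ⦃X Y : C⦄ (a : X ⟶ Y),
    { S : Set (CatArr C) | IsPrincipalRightIdeal S ∧ rIdeal a ⊂ S }.Finite) (hLC : LeftCancellativeCat C) {X Y : C} (f : X ⟶ Y)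
    (hni : ¬ IsIso f) :
    ∃ (W : C) (a : X ⟶ W) (g : W ⟶ Y), IsAtomArrow a ∧ f = a ≫ g := by
  classical
  set T := { S : Set (CatArr C) | IsPrincipalRightIdeal S ∧ rIdeal f ⊂ S ∧
    S ≠ rIdeal (𝟙 X) } with hTdef
  by_cases hT : T.Nonempty
  · have hTfin : T.Finite := (hFin f).subset (fun S hS => ⟨hS.1, hS.2.1⟩)
    obtain ⟨S, hS, hmax⟩ := Set.Finite.exists_maximalFor id T hTfin hT
    obtain ⟨U, V, x₀, rfl⟩ := hS.1
    obtain ⟨hXU, w, hw⟩ := factor_of_rIdeal_subset hS.2.1.subset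
    set a := eqToHom hXU ≫ x₀ with ha
    have hra : rIdeal a = rIdeal x₀ := rIdeal_eqToHom_comp hXU x₀
    have hfa : f = a ≫ w := by rw [hw, ha, Category.assoc]
    have hnia : ¬ IsIso a := by
      intro hia
      exact hS.2.2 (by rw [← hra]; exact rIdeal_eq_top_of_isIso a hia)
    refine ⟨V, a, w, ⟨hnia, ?_⟩, hfa⟩
    intro Z b c hbc
    by_contra hcon
    push_neg at hcon
    obtain ⟨hb, hc⟩ := hcon
    have h1 : rIdeal a ⊂ rIdeal b := rIdeal_ssubset hLC b c hc hbc
    have h2 : rIdeal b ∈ T := by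
      refine ⟨⟨X, Z, b, rfl⟩, ?_, ?_⟩
      · rw [← hra] at hS; exact hS.2.1.trans h1
      · intro htop
        exact hb (isIso_of_top_subset hLC (le_of_eq htop.symm))
    have heq := le_antisymm (by rw [← hra]; exact le_of_lt h1) (hmax h2 (by rw [← hra]; exact le_of_lt h1))
    simp only [id] at heq
    rw [hra, heq] at h1
    exact (ssubset_irrefl _) h1
  · refine ⟨Y, f, 𝟙 Y, ⟨hni, ?_⟩, by simp⟩
    intro Z b c hbc
    by_contra hcon
    push_neg at hcon
    exact hT ⟨rIdeal b, ⟨X, Z, b, rfl⟩, rIdeal_ssubset hLC b c hcon.2 hbc,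
      fun htop => hcon.1 (isIso_of_top_subset hLC (le_of_eq htop.symm))⟩

lemma reesMeasure_left_factor_lt (hFin : ∀ ⦃X Y : C⦄ (a : X ⟶ Y),
    { S : Set (CatArr C) | IsPrincipalRightIdeal S ∧ rIdeal a ⊂ S }.Finite) (hLC : LeftCancellativeCat C)
    {X W Y : C} {f : X ⟶ Y} {a : X ⟶ W} {g : W ⟶ Y}
    (hfa : f = a ≫ g) (hnia : ¬ IsIso a) (hni : ¬ IsIso f) :
    reesMeasure hFin g < reesMeasure hFin f := by
  classical
  set A := (hFin g).toFinset with hA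
  set B := (hFin f).toFinset with hB
  set top : Set (CatArr C) := rIdeal (𝟙 X) with htopdef
  have htopB : top ∈ B := by
    rw [hB, Set.Finite.mem_toFinset]
    exact ⟨⟨X, X, 𝟙 X, rfl⟩, rIdeal_ssubset_top hLC f hni⟩
  set φ : Set (CatArr C) → Set (CatArr C) := fun S =>
    if h : ∃ (V' : C) (y : W ⟶ V'), S = rIdeal y ∧ ∃ t : V' ⟶ Y, g = y ≫ t then
      rIdeal (a ≫ h.choose_spec.choose) else ∅ with hφ
  -- facts about chosen representatives
  have hrep : ∀ S ∈ A, ∃ (V' : C) (y : W ⟶ V'), S = rIdeal y ∧ ∃ t : V' ⟶ Y, g = y ≫ t := by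
    intro S hS
    rw [hA, Set.Finite.mem_toFinset] at hS
    obtain ⟨V', y, t, hSy, hgt⟩ := principal_rep g hS.1 hS.2.subset
    exact ⟨V', y, hSy, t, hgt⟩
  have hstrict : ∀ S ∈ A, rIdeal g ⊂ S := by
    intro S hS
    rw [hA, Set.Finite.mem_toFinset] at hS
    exact hS.2
  have hkey : ∀ S ∈ A, ∀ (V' : C) (y : W ⟶ V'), S = rIdeal y →
      (∃ t : V' ⟶ Y, g = y ≫ t) → rIdeal f ⊂ rIdeal (a ≫ y) ∧ rIdeal (a ≫ y) ≠ top := by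
    intro S hS V' y hSy ⟨t, hgt⟩
    constructor
    · rw [Set.ssubset_def]
      constructor
      · exact rIdeal_subset_of_factor (a ≫ y) t
          (by rw [hfa, hgt, Category.assoc])
      · intro hsub
        obtain ⟨u, hu⟩ := factor_of_rIdeal_subset' hsub
        have hyu : y = g ≫ u := hLC a _ _ (by rw [← Category.assoc, ← hfa, ← hu])
        have : rIdeal y ⊆ rIdeal g := rIdeal_subset_of_factor g u hyu
        rw [← hSy] at this
        exact (hstrict S hS).not_subset this
    · intro htop
      have hiso : IsIso (a ≫ y) := isIso_of_top_subset hLC (le_of_eq htop.symm)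
      have : a ≫ (y ≫ inv (a ≫ y)) = 𝟙 X := by
        rw [← Category.assoc, IsIso.hom_inv_id]
      exact hnia (split_iso hLC a _ this).1
  have hmaps : ∀ S ∈ A, φ S ∈ B.erase top := by
    intro S hS
    have hcond := hrep S hS
    rw [hφ]
    simp only [dif_pos hcond]
    obtain ⟨hSy, hty⟩ := hcond.choose_spec.choose_spec
    obtain ⟨h1, h2⟩ := hkey S hS _ _ hSy hty
    refine Finset.mem_erase.mpr ⟨h2, ?_⟩
    rw [hB, Set.Finite.mem_toFinset]
    exact ⟨⟨X, _, a ≫ hcond.choose_spec.choose, rfl⟩, h1⟩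
  have hinj : ∀ S₁ ∈ A, ∀ S₂ ∈ A, φ S₁ = φ S₂ → S₁ = S₂ := by
    intro S₁ h₁ S₂ h₂ heq
    have hc₁ := hrep S₁ h₁
    have hc₂ := hrep S₂ h₂
    rw [hφ] at heq
    simp only [dif_pos hc₁, dif_pos hc₂] at heq
    obtain ⟨hS₁y, t₁, ht₁⟩ := hc₁.choose_spec.choose_spec
    obtain ⟨hS₂y, t₂, ht₂⟩ := hc₂.choose_spec.choose_spec
    set y₁ := hc₁.choose_spec.choose
    set y₂ := hc₂.choose_spec.choose
    have hsub : ∀ {V V' : C} (z : W ⟶ V) (z' : W ⟶ V'),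
        rIdeal (a ≫ z) ⊆ rIdeal (a ≫ z') → rIdeal z ⊆ rIdeal z' := by
      intro V V' z z' hzz
      obtain ⟨u, hu⟩ := factor_of_rIdeal_subset' hzz
      have : z = z' ≫ u := hLC a _ _ (by rw [← Category.assoc]; exact hu)
      exact rIdeal_subset_of_factor z' u this
    have : rIdeal y₁ = rIdeal y₂ :=
      subset_antisymm (hsub y₁ y₂ (le_of_eq heq)) (hsub y₂ y₁ (le_of_eq heq.symm))
    rw [hS₁y, hS₂y, this]
  calc A.card ≤ (B.erase top).card := Finset.card_le_card_of_injOn φ hmaps hinj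
    _ < B.card := Finset.card_erase_lt_of_mem htopB

lemma hex_of_rees (hFin : ∀ ⦃X Y : C⦄ (a : X ⟶ Y),
    { S : Set (CatArr C) | IsPrincipalRightIdeal S ∧ rIdeal a ⊂ S }.Finite) (hLC : LeftCancellativeCat C) (hOII : OnlyIdentityIsos C) :
    ∀ {X Y : C} (f : X ⟶ Y),
      ∃ p : Quiver.Path (AtomQuiv.mk X) (AtomQuiv.mk Y), evP p = f := by
  have key : ∀ (n : ℕ) {X Y : C} (f : X ⟶ Y), reesMeasure hFin f = n →
      ∃ p : Quiver.Path (AtomQuiv.mk X) (AtomQuiv.mk Y), evP p = f := by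
    intro n
    induction n using Nat.strong_induction_on with
    | _ n ih =>
      intro X Y f hf
      by_cases hiso : IsIso f
      · obtain ⟨e, rfl⟩ := hOII f hiso
        subst e
        exact ⟨Quiver.Path.nil, by simp⟩
      · obtain ⟨W, a, g, ha, hfa⟩ := atom_left_factor hFin hLC f hiso
        have hlt : reesMeasure hFin g < n := by
          rw [← hf]
          exact reesMeasure_left_factor_lt hFin hLC hfa ha.1 hiso
        obtain ⟨p, hp⟩ := ih _ hlt g rfl
        refine ⟨(Quiver.Hom.toPath (⟨a, ha⟩ : AtomQuiv.mk X ⟶ AtomQuiv.mk W)).comp p, ?_⟩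
        rw [evP_comp]
        simp [Quiver.Hom.toPath, hp, hfa]
  intro X Y f
  exact key (reesMeasure hFin f) f rfl

end Rees

theorem free_of_package (hLC : LeftCancellativeCat C) (hEq : Equidivisible C)
    (hOII : OnlyIdentityIsos C)
    (hex : ∀ {X Y : C} (f : X ⟶ Y),
      ∃ p : Quiver.Path (AtomQuiv.mk X) (AtomQuiv.mk Y), evP p = f) :
    IsFreeCategory C := by
  classical
  have einj := fun {X Y : AtomQuiv C} (p q : Quiver.Path X Y) (h : evP p = evP q) =>
    evP_inj hLC hEq hOII p q h
  have hex' : ∀ (X Y : C) (f : X ⟶ Y),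
      ∃ p : Quiver.Path (AtomQuiv.mk X) (AtomQuiv.mk Y), evP p = f :=
    fun X Y f => hex f
  choose dec hdec using hex'
  refine ⟨AtomQuiv C, inferInstance,
    { obj := fun X => AtomQuiv.as X
      map := fun p => evP p
      map_id := fun X => evP_nil
      map_comp := fun p q => evP_comp p q },
    { obj := fun X => AtomQuiv.mk X
      map := fun {X Y} f => dec X Y f
      map_id := fun X => einj _ _ (by rw [hdec]; exact evP_nil.symm)
      map_comp := fun {X Y Z} f g => einj _ _ (by
        rw [hdec]
        show f ≫ g = evP ((dec X Y f).comp (dec Y Z g))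
        rw [evP_comp, hdec, hdec]) }, ?_, ?_⟩
  · refine CategoryTheory.Functor.ext (fun X => rfl) ?_
    intro X Y p
    simp only [Functor.comp_map, Functor.id_map, eqToHom_refl, Category.comp_id,
      Category.id_comp]
    exact einj _ _ (by rw [hdec]; congr 1; exact (by simp : eqToHom rfl ≫ p ≫ eqToHom rfl = p).symm)
  · refine CategoryTheory.Functor.ext (fun X => rfl) ?_
    intro X Y f
    simp only [Functor.comp_map, Functor.id_map, eqToHom_refl, Category.comp_id,
      Category.id_comp]
    exact hdec X Y f

section PathsLemmas

variable {V : Type u} [Quiver.{v + 1} V]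

lemma path_len_zero {X Y : Paths V} (p : X ⟶ Y) (h : Quiver.Path.length p = 0) :
    ∃ e : X = Y, p = eqToHom e := by
  change @Quiver.Path V _ X Y at p
  cases p with
  | nil => exact ⟨rfl, rfl⟩
  | cons p' e => simp [Quiver.Path.length] at h

lemma path_id_length {X : Paths V} : Quiver.Path.length (𝟙 X) = 0 := rfl

lemma path_comp_length {X Y Z : Paths V} (p : X ⟶ Y) (q : Y ⟶ Z) :
    Quiver.Path.length (p ≫ q) = Quiver.Path.length p + Quiver.Path.length q :=
  Quiver.Path.length_comp p q

lemma path_isIso_iff {X Y : Paths V} (p : X ⟶ Y) :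
    IsIso p ↔ Quiver.Path.length p = 0 := by
  constructor
  · intro hp
    have h := IsIso.hom_inv_id p
    have := congrArg Quiver.Path.length h
    rw [path_comp_length] at this
    rw [path_id_length] at this
    omega
  · intro h
    obtain ⟨e, rfl⟩ := path_len_zero p h
    infer_instance

lemma paths_OII : OnlyIdentityIsos (Paths V) := fun X Y g hg =>
  path_len_zero g ((path_isIso_iff g).1 hg)

lemma path_atom_iff {X Y : Paths V} (p : X ⟶ Y) :
    IsAtomArrow p ↔ Quiver.Path.length p = 1 := by
  letI : Quiver.{v+1} (Paths V) := inferInstanceAs (Quiver.{v+1} V)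
  constructor
  · rintro ⟨hni, hfac⟩
    change Quiver.Path (X : V) (Y : V) at p
    cases p with
    | nil =>
      refine absurd ?_ hni
      show IsIso (𝟙 X)
      infer_instance
    | cons p' e =>
      cases p' with
      | nil => rfl
      | cons p'' e'' =>
        have hdecomp : ((p''.cons e'').cons e) = (p''.cons e'').comp e.toPath := by
          simp [Quiver.Hom.toPath]
        rcases hfac (p''.cons e'') e.toPath hdecomp with h' | h'
        · replace h' := (path_isIso_iff (X := X) (p''.cons e'')).1 h'
          simp [Quiver.Path.length] at h'
        · replace h' := (path_isIso_iff (Y := Y) e.toPath).1 h'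
          simp [Quiver.Hom.toPath, Quiver.Path.length] at h'
  · intro h
    constructor
    · rw [path_isIso_iff]; omega
    · intro Z b c hbc
      have := congrArg Quiver.Path.length hbc
      rw [path_comp_length] at this
      rw [h] at this
      rcases Nat.eq_zero_or_pos (Quiver.Path.length b) with h0 | h0
      · exact Or.inl ((path_isIso_iff b).2 h0)
      · exact Or.inr ((path_isIso_iff c).2 (by omega))

lemma paths_equidiv : Equidivisible (Paths V) := by
  have aux : ∀ {Y Z : V} (d : Quiver.Path Y Z) {W X : V} (b : Quiver.Path X Z)
      (a : Quiver.Path W X) (c : Quiver.Path W Y), a.comp b = c.comp d →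
      (∃ u : Quiver.Path Y X, a = c.comp u ∧ d = u.comp b) ∨
      (∃ v : Quiver.Path X Y, c = a.comp v ∧ b = v.comp d) := by
    intro Y Z d
    induction d with
    | nil =>
      intro W X b a c h
      exact Or.inr ⟨b, by simpa using h.symm, by simp⟩
    | cons d' e ihd =>
      intro W X b a c h
      cases b with
      | nil =>
        exact Or.inl ⟨d'.cons e, by simpa using h, by simp⟩
      | cons b' e' =>
        rw [Quiver.Path.comp_cons, Quiver.Path.comp_cons] at h
        obtain rfl := Quiver.Path.obj_eq_of_cons_eq_cons h
        obtain hpath := Quiver.Path.heq_of_cons_eq_cons h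
        rw [heq_eq_eq] at hpath
        obtain hhom := Quiver.Path.hom_heq_of_cons_eq_cons h
        rw [heq_eq_eq] at hhom
        subst hhom
        rcases ihd b' a c hpath with ⟨u, hu1, hu2⟩ | ⟨v, hv1, hv2⟩
        · exact Or.inl ⟨u, hu1, by rw [Quiver.Path.comp_cons, ← hu2]⟩
        · exact Or.inr ⟨v, hv1, by rw [Quiver.Path.comp_cons, ← hv2]⟩
  intro W X Y Z a b c d h
  exact aux d b a c h

end PathsLemmas

theorem package_of_free (hfree : IsFreeCategory C) :
    Equidivisible C ∧ Nonempty (LengthFunctor C) ∧ OnlyIdentityIsos C := by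
  obtain ⟨V, q, F, G, hFG, hGF⟩ := hfree
  have hobj : ∀ X : C, F.obj (G.obj X) = X := fun X => Functor.congr_obj hGF X
  have hobj' : ∀ Z : Paths V, G.obj (F.obj Z) = Z := fun Z => Functor.congr_obj hFG Z
  have hmap : ∀ {X Y : C} (f : X ⟶ Y),
      F.map (G.map f) = eqToHom (hobj X) ≫ f ≫ eqToHom (hobj Y).symm := by
    intro X Y f
    have := Functor.congr_hom hGF f
    simpa using this
  have hmap' : ∀ {Z W : Paths V} (p : Z ⟶ W),
      G.map (F.map p) = eqToHom (hobj' Z) ≫ p ≫ eqToHom (hobj' W).symm := by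
    intro Z W p
    have := Functor.congr_hom hFG p
    simpa using this
  have hfeq : ∀ {X Y : C} (f : X ⟶ Y),
      f = eqToHom (hobj X).symm ≫ F.map (G.map f) ≫ eqToHom (hobj Y) := by
    intro X Y f; rw [hmap]; simp
  have hGinj : ∀ {X Y : C} (f g : X ⟶ Y), G.map f = G.map g → f = g := by
    intro X Y f g hfg
    rw [hfeq f, hfeq g, hfg]
  have hisoG : ∀ {X Y : C} (f : X ⟶ Y), IsIso f ↔ IsIso (G.map f) := by
    intro X Y f
    constructor
    · intro h; haveI := h; infer_instance
    · intro h
      rw [hfeq f]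
      haveI := h
      infer_instance
  have hOIIC : OnlyIdentityIsos C := by
    intro X Y g hg
    have h1 : IsIso (G.map g) := (hisoG g).1 hg
    obtain ⟨e, he⟩ := paths_OII (G.map g) h1
    have hXY : X = Y := (hobj X).symm.trans ((congrArg F.obj e).trans (hobj Y))
    refine ⟨hXY, ?_⟩
    rw [hfeq g, he, eqToHom_map]
    simp
  have hatom : ∀ {X Y : C} (f : X ⟶ Y), IsAtomArrow f ↔ IsAtomArrow (G.map f) := by
    intro X Y f
    constructor
    · rintro ⟨hni, hfac⟩
      refine ⟨fun h => hni ((hisoG f).2 h), ?_⟩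
      intro Z p q hpq
      have hbc : f = (eqToHom (hobj X).symm ≫ F.map p) ≫ (F.map q ≫ eqToHom (hobj Y)) := by
        rw [hfeq f, hpq]
        simp [F.map_comp]
      rcases hfac _ _ hbc with h' | h'
      · left
        have h2 : IsIso (F.map p) := by
          have heq2 : F.map p = eqToHom (hobj X) ≫ (eqToHom (hobj X).symm ≫ F.map p) := by
            simp
          rw [heq2]; haveI := h'; infer_instance
        have h3 : IsIso (G.map (F.map p)) := by haveI := h2; infer_instance
        rw [hmap'] at h3
        have heq3 : p = eqToHom (hobj' (G.obj X)).symm ≫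
            (eqToHom (hobj' (G.obj X)) ≫ p ≫ eqToHom (hobj' Z).symm) ≫
            eqToHom (hobj' Z) := by simp
        rw [heq3]; haveI := h3; infer_instance
      · right
        have h2 : IsIso (F.map q) := by
          have heq2 : F.map q = (F.map q ≫ eqToHom (hobj Y)) ≫ eqToHom (hobj Y).symm := by
            simp
          rw [heq2]; haveI := h'; infer_instance
        have h3 : IsIso (G.map (F.map q)) := by haveI := h2; infer_instance
        rw [hmap'] at h3
        have heq3 : q = eqToHom (hobj' Z).symm ≫
            (eqToHom (hobj' Z) ≫ q ≫ eqToHom (hobj' (G.obj Y)).symm) ≫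
            eqToHom (hobj' (G.obj Y)) := by simp
        rw [heq3]; haveI := h3; infer_instance
    · rintro ⟨hni, hfac⟩
      refine ⟨fun h => hni ((hisoG f).1 h), ?_⟩
      intro Z b c hbc
      have h' : G.map f = G.map b ≫ G.map c := by rw [hbc, G.map_comp]
      rcases hfac (G.map b) (G.map c) h' with h'' | h''
      · exact Or.inl ((hisoG b).2 h'')
      · exact Or.inr ((hisoG c).2 h'')
  have L : LengthFunctor C := {
    len := fun {X Y} f => Quiver.Path.length (G.map f)
    len_comp := by
      intro X Y Z f g
      show Quiver.Path.length (G.map (f ≫ g)) =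
        Quiver.Path.length (G.map f) + Quiver.Path.length (G.map g)
      rw [G.map_comp]
      exact path_comp_length (G.map f) (G.map g)
    len_eq_zero_iff := fun {X Y} f => (path_isIso_iff (G.map f)).symm.trans (hisoG f).symm
    len_eq_one_iff := fun {X Y} f => (path_atom_iff (G.map f)).symm.trans (hatom f).symm }
  have hGmid : ∀ {P Q : C} (u : G.obj P ⟶ G.obj Q),
      G.map (eqToHom (hobj P).symm ≫ F.map u ≫ eqToHom (hobj Q)) = u := by
    intro P Q u
    rw [G.map_comp, G.map_comp, hmap', eqToHom_map, eqToHom_map]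
    simp
  have hEqC : Equidivisible C := by
    intro W X Y Z a b c d h
    have h' : G.map a ≫ G.map b = G.map c ≫ G.map d := by
      rw [← G.map_comp, ← G.map_comp, h]
    rcases paths_equidiv (G.map a) (G.map b) (G.map c) (G.map d) h' with
      ⟨u, hu1, hu2⟩ | ⟨v, hv1, hv2⟩
    · refine Or.inl ⟨eqToHom (hobj Y).symm ≫ F.map u ≫ eqToHom (hobj X), ?_, ?_⟩
      · apply hGinj
        rw [G.map_comp, hGmid]
        exact hu1
      · apply hGinj
        rw [G.map_comp, hGmid]
        exact hu2
    · refine Or.inr ⟨eqToHom (hobj X).symm ≫ F.map v ≫ eqToHom (hobj Y), ?_, ?_⟩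
      · apply hGinj
        rw [G.map_comp, hGmid]
        exact hv1
      · apply hGinj
        rw [G.map_comp, hGmid]
        exact hv2
  exact ⟨hEqC, ⟨L⟩, hOIIC⟩

/-- A category is isomorphic to a free category on a directed graph iff it
is a left Rees category whose only invertible arrows are identities, equivalently iff it
is an equidivisible category with a length functor whose only invertible arrows are
identities. -/
theorem free_iff_leftRees_trivial_isos (C : Type u) [Category.{v} C] :
    (IsFreeCategory C ↔ IsLeftReesCategory C ∧ OnlyIdentityIsos C) ∧
    (IsFreeCategory C ↔
      Equidivisible C ∧ Nonempty (LengthFunctor C) ∧ OnlyIdentityIsos C) := by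
  have iff2 : IsFreeCategory C ↔
      Equidivisible C ∧ Nonempty (LengthFunctor C) ∧ OnlyIdentityIsos C := by
    constructor
    · exact package_of_free
    · rintro ⟨hEq, ⟨L⟩, hOII⟩
      exact free_of_package (leftCancel_of_length hEq L hOII) hEq hOII
        (fun {X Y} f => hex_of_length L hOII f)
  refine ⟨?_, iff2⟩
  constructor
  · intro hfree
    obtain ⟨hEq, ⟨L⟩, hOII⟩ := iff2.1 hfree
    exact ⟨⟨leftCancel_of_length hEq L hOII, rigid_of_equidiv hEq,
      fun {X Y} a => finiteness_of_length hEq L hOII a⟩, hOII⟩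
  · rintro ⟨⟨hLC, hRR, hFin⟩, hOII⟩
    exact free_of_package hLC (equidiv_of_rigid hLC hRR) hOII
      (fun {X Y} f => hex_of_rees hFin hLC hOII f)
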